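/- arXiv:2410.14802 — 2 statements merged into one kernel-verified Lean document; each statement's English description precedes it below -/
import Mathlib

section
/- Let ρ ∈ ℝ, let x : ℝ → ℝ^{d₁}, y : ℝ → ℝ^{d₂} be differentiable curves, let G, G̃ : ℝ → Matrix (Fin d₁) (Fin d₂) ℝ and u : ℝ → ℝ be arbitrary functions, and suppose that for every t the derivatives satisfy x'(t) = −G̃(t)·(y(t) + ρ u(t) • (G(t)ᵀ·x(t))) and y'(t) = −G̃(t)ᵀ·(x(t) + ρ u(t) • (G(t)·y(t))). Then for every t, the derivative of B(t) := ½(‖x(t)‖² − ‖y(t)‖²) equals ρ u(t) (‖G(t)·y(t)‖² − ‖G(t)ᵀ·x(t)‖²) + ρ u(t) (⟪(G̃(t) − G(t))·y(t), G(t)·y(t)⟫ − ⟪(G̃(t) − G(t))ᵀ·x(t), G(t)ᵀ·x(t)⟫). -/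
open scoped RealInnerProductSpace Matrix

noncomputable def mv {d₁ d₂ : ℕ} (A : Matrix (Fin d₁) (Fin d₂) ℝ)
    (v : EuclideanSpace ℝ (Fin d₂)) : EuclideanSpace ℝ (Fin d₁) :=
  WithLp.toLp 2 (A.mulVec v)

lemma mv_adj {d₁ d₂ : ℕ} (A : Matrix (Fin d₁) (Fin d₂) ℝ)
    (v : EuclideanSpace ℝ (Fin d₂)) (w : EuclideanSpace ℝ (Fin d₁)) :
    ⟪mv A v, w⟫ = ⟪v, mv Aᵀ w⟫ := by
  simp only [mv, PiLp.inner_apply, RCLike.inner_apply, starRingEnd_apply, star_trivial, PiLp.toLp_apply,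
    Matrix.mulVec, dotProduct, Matrix.transpose_apply, Finset.sum_mul, Finset.mul_sum]
  rw [Finset.sum_comm]
  congr 1; ext i; congr 1; ext j; ring

lemma mv_add {d₁ d₂ : ℕ} (A : Matrix (Fin d₁) (Fin d₂) ℝ) (v w : EuclideanSpace ℝ (Fin d₂)) :
    mv A (v + w) = mv A v + mv A w := by
  simp [mv, Matrix.mulVec_add]

lemma mv_smul {d₁ d₂ : ℕ} (A : Matrix (Fin d₁) (Fin d₂) ℝ) (c : ℝ) (v : EuclideanSpace ℝ (Fin d₂)) :
    mv A (c • v) = c • mv A v := by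
  simp [mv, Matrix.mulVec_smul]

lemma mv_sub_mat {d₁ d₂ : ℕ} (A B : Matrix (Fin d₁) (Fin d₂) ℝ) (v : EuclideanSpace ℝ (Fin d₂)) :
    mv (A - B) v = mv A v - mv B v := by
  simp [mv, Matrix.sub_mulVec]

/-- Exact dynamics of balancedness under SAM's limiting flow on the
non-overparametrized problem. -/
theorem sam_nop_balancedness_dynamics {d₁ d₂ : ℕ} (ρ : ℝ)
    (x : ℝ → EuclideanSpace ℝ (Fin d₁)) (y : ℝ → EuclideanSpace ℝ (Fin d₂))
    (G G' : ℝ → Matrix (Fin d₁) (Fin d₂) ℝ) (u : ℝ → ℝ)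
    (hx : ∀ t, HasDerivAt x (-(mv (G' t) (y t + (ρ * u t) • mv (G t)ᵀ (x t)))) t)
    (hy : ∀ t, HasDerivAt y (-(mv (G' t)ᵀ (x t + (ρ * u t) • mv (G t) (y t)))) t) :
    ∀ t, HasDerivAt (fun s => (1 / 2 : ℝ) * (‖x s‖ ^ 2 - ‖y s‖ ^ 2))
      (ρ * u t * (‖mv (G t) (y t)‖ ^ 2 - ‖mv (G t)ᵀ (x t)‖ ^ 2)
        + ρ * u t * (⟪mv (G' t - G t) (y t), mv (G t) (y t)⟫
            - ⟪mv (G' t - G t)ᵀ (x t), mv (G t)ᵀ (x t)⟫)) t := by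
  intro t
  have hX := ((hx t).inner ℝ (hx t))
  have hY := ((hy t).inner ℝ (hy t))
  have h := (hX.sub hY).const_mul (1/2 : ℝ)
  have hfun : (fun s => (1/2:ℝ) * (⟪x s, x s⟫ - ⟪y s, y s⟫)) =
      fun s => (1/2:ℝ) * (‖x s‖^2 - ‖y s‖^2) := by
    funext s; rw [real_inner_self_eq_norm_sq, real_inner_self_eq_norm_sq]
  simp only [Pi.sub_apply] at h; rw [hfun] at h
  refine h.congr_deriv ?_
  have key : ∀ (v : EuclideanSpace ℝ (Fin d₂)) (w : EuclideanSpace ℝ (Fin d₁)),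
      ⟪mv (G' t) v, w⟫ = ⟪v, mv (G' t)ᵀ w⟫ := fun v w => mv_adj _ v w
  simp only [mv_sub_mat, Matrix.transpose_sub, inner_sub_left, mv_add, mv_smul,
    inner_neg_left, inner_neg_right, inner_add_left, inner_add_right,
    inner_smul_left, inner_smul_right, RCLike.conj_to_real,
    key, Matrix.transpose_transpose,
    ← real_inner_self_eq_norm_sq]
  have e1 : ⟪x t, mv (G' t) (mv (G t)ᵀ (x t))⟫ = ⟪mv (G' t)ᵀ (x t), mv (G t)ᵀ (x t)⟫ := by
    rw [real_inner_comm, mv_adj]; exact real_inner_comm _ _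
  have e2 : ⟪mv (G' t)ᵀ (mv (G t) (y t)), y t⟫ = ⟪mv (G' t) (y t), mv (G t) (y t)⟫ := by
    rw [real_inner_comm]; exact (mv_adj _ _ _).symm
  have e3 : ⟪x t, mv (G' t) (y t)⟫ = ⟪mv (G' t)ᵀ (x t), y t⟫ := by
    rw [real_inner_comm, mv_adj]; exact real_inner_comm _ _
  have e4 : ⟪y t, mv (G' t)ᵀ (mv (G t) (y t))⟫ = ⟪mv (G' t)ᵀ (mv (G t) (y t)), y t⟫ :=
    real_inner_comm _ _
  have c1 : ⟪mv (G t)ᵀ (x t), mv (G' t)ᵀ (x t)⟫ = ⟪mv (G' t)ᵀ (x t), mv (G t)ᵀ (x t)⟫ :=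
    real_inner_comm _ _
  have c2 := real_inner_comm (mv (G' t) (y t)) (mv (G t) (y t))
  have h1 := congrArg (fun z => (ρ * u t) * z) e1
  have h2 := congrArg (fun z => (ρ * u t) * z) e2
  have h4 := congrArg (fun z => (ρ * u t) * z) e4
  have hc1 := congrArg (fun z => (ρ * u t) * z) c1
  have hc2 := congrArg (fun z => (ρ * u t) * z) c2
  ring_nf
  ring_nf at h1 h2 h4 hc1 hc2
  linarith [h1, h2, h4, hc1, hc2, e3]
end

section
/- Let ρ ∈ ℝ, let D ≥ 1, and for each layer l ∈ Fin D let x_l : ℝ → ℝ^{d₁} and y_l : ℝ → ℝ^{d₂} be differentiable curves, G_l, G̃_l : ℝ → Matrix (Fin d₁) (Fin d₂) ℝ arbitrary matrix-valued functions, and u : ℝ → ℝ an arbitrary scalar function, such that for every t and every l the derivatives satisfy x_l'(t) = −G̃_l(t)·(y_l(t) + ρ u(t) • (G_l(t)ᵀ·x_l(t))) and y_l'(t) = −G̃_l(t)ᵀ·(x_l(t) + ρ u(t) • (G_l(t)·y_l(t))). Then for every l and t, the derivative of the per-layer balancedness B_l(t) := ½(‖x_l(t)‖² − ‖y_l(t)‖²)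 equals ρ u(t)(‖G_l(t)·y_l(t)‖² − ‖G_l(t)ᵀ·x_l(t)‖²) + ρ u(t)(⟪(G̃_l(t) − G_l(t))·y_l(t), G_l(t)·y_l(t)⟫ − ⟪(G̃_l(t) − G_l(t))ᵀ·x_l(t), G_l(t)ᵀ·x_l(t)⟫), and consequently the total balancedness B(t) := ∑_l B_l(t) has derivative equal to the sum over l of these expressions. -/
open scoped RealInnerProductSpace Matrix

lemma inner_mv {d₁ d₂ : ℕ} (A : Matrix (Fin d₁) (Fin d₂) ℝ)
    (v : EuclideanSpace ℝ (Fin d₁)) (w : EuclideanSpace ℝ (Fin d₂)) :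
    ⟪v, mv A w⟫ = ⟪mv Aᵀ v, w⟫ := by
  simp only [mv, PiLp.inner_apply, PiLp.toLp_apply, RCLike.inner_apply, starRingEnd_apply, star_trivial]
  simp only [Matrix.mulVec, dotProduct, Matrix.transpose_apply, Finset.mul_sum,
    Finset.sum_mul]
  rw [Finset.sum_comm]
  congr 1; ext i; congr 1; ext j; ring

/-- Multi-layer (LoRA) extension of SAM's balancedness dynamics on the
non-overparametrized problem: per-layer and total balancedness dynamics. -/
theorem sam_nop_multilayer_balancedness_dynamics {d₁ d₂ D : ℕ} (hD : 1 ≤ D) (ρ : ℝ)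
    (x : Fin D → ℝ → EuclideanSpace ℝ (Fin d₁))
    (y : Fin D → ℝ → EuclideanSpace ℝ (Fin d₂))
    (G G' : Fin D → ℝ → Matrix (Fin d₁) (Fin d₂) ℝ) (u : ℝ → ℝ)
    (hx : ∀ t, ∀ l, HasDerivAt (x l)
      (-(mv (G' l t) (y l t + (ρ * u t) • mv (G l t)ᵀ (x l t)))) t)
    (hy : ∀ t, ∀ l, HasDerivAt (y l)
      (-(mv (G' l t)ᵀ (x l t + (ρ * u t) • mv (G l t) (y l t)))) t) :
    (∀ l, ∀ t, HasDerivAt (fun s => (1 / 2 : ℝ) * (‖x l s‖ ^ 2 - ‖y l s‖ ^ 2))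
      (ρ * u t * (‖mv (G l t) (y l t)‖ ^ 2 - ‖mv (G l t)ᵀ (x l t)‖ ^ 2)
        + ρ * u t * (⟪mv (G' l t - G l t) (y l t), mv (G l t) (y l t)⟫
            - ⟪mv (G' l t - G l t)ᵀ (x l t), mv (G l t)ᵀ (x l t)⟫)) t) ∧
    (∀ t, HasDerivAt
      (fun s => ∑ l : Fin D, (1 / 2 : ℝ) * (‖x l s‖ ^ 2 - ‖y l s‖ ^ 2))
      (∑ l : Fin D,
        (ρ * u t * (‖mv (G l t) (y l t)‖ ^ 2 - ‖mv (G l t)ᵀ (x l t)‖ ^ 2)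
          + ρ * u t * (⟪mv (G' l t - G l t) (y l t), mv (G l t) (y l t)⟫
              - ⟪mv (G' l t - G l t)ᵀ (x l t), mv (G l t)ᵀ (x l t)⟫))) t) := by
  have key : ∀ l, ∀ t, HasDerivAt (fun s => (1 / 2 : ℝ) * (‖x l s‖ ^ 2 - ‖y l s‖ ^ 2))
      (ρ * u t * (‖mv (G l t) (y l t)‖ ^ 2 - ‖mv (G l t)ᵀ (x l t)‖ ^ 2)
        + ρ * u t * (⟪mv (G' l t - G l t) (y l t), mv (G l t) (y l t)⟫
            - ⟪mv (G' l t - G l t)ᵀ (x l t), mv (G l t)ᵀ (x l t)⟫)) t := by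
    intro l t
    set x' := -(mv (G' l t) (y l t + (ρ * u t) • mv (G l t)ᵀ (x l t))) with hx'
    set y' := -(mv (G' l t)ᵀ (x l t + (ρ * u t) • mv (G l t) (y l t))) with hy'
    have hxx : HasDerivAt (fun s => ⟪x l s, x l s⟫) (⟪x l t, x'⟫ + ⟪x', x l t⟫) t :=
      (hx t l).inner ℝ (hx t l)
    have hyy : HasDerivAt (fun s => ⟪y l s, y l s⟫) (⟪y l t, y'⟫ + ⟪y', y l t⟫) t :=
      (hy t l).inner ℝ (hy t l)
    have h : HasDerivAt (fun s => (1 / 2 : ℝ) * (‖x l s‖ ^ 2 - ‖y l s‖ ^ 2))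
        ((1 / 2 : ℝ) * ((⟪x l t, x'⟫ + ⟪x', x l t⟫) - (⟪y l t, y'⟫ + ⟪y', y l t⟫))) t := by
      have := (hxx.sub hyy).const_mul (1 / 2 : ℝ)
      convert this using 2 with s
      · rfl
      · rfl
      simp only [Pi.sub_apply]
      rw [real_inner_self_eq_norm_sq, real_inner_self_eq_norm_sq]
    have h1 : ⟪x l t, mv (G' l t) (y l t)⟫ = ⟪y l t, mv (G' l t)ᵀ (x l t)⟫ := by
      rw [inner_mv]; exact real_inner_comm _ _
    have h2 : ⟪x l t, mv (G' l t) (mv (G l t)ᵀ (x l t))⟫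
        = ⟪mv (G' l t)ᵀ (x l t), mv (G l t)ᵀ (x l t)⟫ := inner_mv _ _ _
    have h3 : ⟪y l t, mv (G' l t)ᵀ (mv (G l t) (y l t))⟫
        = ⟪mv (G' l t) (y l t), mv (G l t) (y l t)⟫ := by
      rw [inner_mv, Matrix.transpose_transpose]
    convert h using 1
    rw [hx', hy', mv_add, mv_add, mv_smul, mv_smul,
      mv_sub_mat, Matrix.transpose_sub, mv_sub_mat]
    simp only [inner_neg_left, inner_neg_right, inner_add_left, inner_add_right,
      inner_smul_left, inner_smul_right, inner_sub_left, RCLike.ofReal_real_eq_id, id_eq,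
      starRingEnd_apply, star_trivial]
    rw [← real_inner_self_eq_norm_sq, ← real_inner_self_eq_norm_sq, h1, h2, h3,
      (real_inner_comm (x l t) (mv (G' l t) (mv (G l t)ᵀ (x l t)))).trans h2,
      (real_inner_comm (y l t) (mv (G' l t)ᵀ (mv (G l t) (y l t)))).trans h3,
      (real_inner_comm (x l t) (mv (G' l t) (y l t))).trans
        (h1.trans (real_inner_comm _ _))]
    ring
  refine ⟨key, fun t => ?_⟩
  exact HasDerivAt.fun_sum fun l _ => key l t
end
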